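/- (Integral turnpike estimate for output stabilization underlying Theorem 4.2.) Assume: H ∈ C²(𝕏, ℝ), 𝕐 := H_x(𝕏) is open, H_x : 𝕏 → 𝕐 is a C¹-diffeomorphism; S(x) = eᵀx with e ∈ ℝⁿ \ {0}; ⋂_{k=1}^N (J_k e)^⊥ ∩ 𝕐 ≠ ∅. Let C ∈ ℝ^{p×n}, let y_ref be in the range of C, fix a compact set K ⊆ 𝕏, α₁, α₂, T₀ > 0, C₂ ≥ 0, and define the stage cost ℓ̃(x,u) = ‖Cx − y_ref‖² + (α₁ g(x)ᵀH_x(x) − α₂ T₀ g(x)ᵀS_x(x))ᵀ u. Then there exists C₃ ≥ 0, independent of t_f, such that for every t_f > 0 and every continuously differentiable solution x : [0,t_f] → 𝕏 of the RIPHS state equation with continuous control u satisfying x(t) ∈ K for all t and ∫₀^{t_f} ℓ̃(x(t),u(t)) dt ≤ C₂, one has ∫₀^{t_f} [ dist(x(t), C⁻¹{y_ref})² + dist(x(t), 𝒯)² ] dt ≤ C₃. -/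

import Mathlib

open Set Matrix Metric

/-- Matrix–vector multiplication on Euclidean space. -/
noncomputable def mv {a b : ℕ} (A : Matrix (Fin a) (Fin b) ℝ)
    (x : EuclideanSpace ℝ (Fin b)) : EuclideanSpace ℝ (Fin a) :=
  Matrix.toEuclideanLin A x

/-- The Poisson bracket `{S,H}_{J_k}(x) = eᵀ J_k H_x(x)` for the linear entropy `S(x) = eᵀx`. -/
noncomputable def brk {n : ℕ} (J : Matrix (Fin n) (Fin n) ℝ)
    (e Hx : EuclideanSpace ℝ (Fin n)) : ℝ :=
  inner ℝ e (mv J Hx)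

noncomputable section TurnpikeAux

lemma mv_adjoint {a b : ℕ} (A : Matrix (Fin a) (Fin b) ℝ)
    (x : EuclideanSpace ℝ (Fin b)) (y : EuclideanSpace ℝ (Fin a)) :
    (inner ℝ x (mv Aᵀ y) : ℝ) = inner ℝ (mv A x) y := by
  have h : Aᵀ = Aᴴ := (Matrix.conjTranspose_eq_transpose_of_trivial A).symm
  rw [mv, mv, h, Matrix.toEuclideanLin_conjTranspose_eq_adjoint]
  exact LinearMap.adjoint_inner_right _ _ _

lemma mv_add {a b : ℕ} (A B : Matrix (Fin a) (Fin b) ℝ) (x : EuclideanSpace ℝ (Fin b)) :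
    mv (A + B) x = mv A x + mv B x := by
  simp [mv]

lemma mv_sum {a b : ℕ} {ι : Type*} (s : Finset ι) (A : ι → Matrix (Fin a) (Fin b) ℝ)
    (x : EuclideanSpace ℝ (Fin b)) : mv (∑ i ∈ s, A i) x = ∑ i ∈ s, mv (A i) x := by
  simp [mv]

lemma mv_smul {a b : ℕ} (c : ℝ) (A : Matrix (Fin a) (Fin b) ℝ) (x : EuclideanSpace ℝ (Fin b)) :
    mv (c • A) x = c • mv A x := by
  simp [mv]

lemma inner_mv_skew {n : ℕ} (A : Matrix (Fin n) (Fin n) ℝ) (hA : Aᵀ = -A)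
    (x : EuclideanSpace ℝ (Fin n)) : (inner ℝ x (mv A x) : ℝ) = 0 := by
  have h1 : (inner ℝ x (mv Aᵀ x) : ℝ) = inner ℝ (mv A x) x := mv_adjoint A x x
  rw [hA] at h1
  have h2 : mv (-A) x = -(mv A x) := by simp [mv]
  rw [h2, inner_neg_right, real_inner_comm] at h1
  rw [real_inner_comm]
  linarith

lemma mv_continuous {a b : ℕ} (A : Matrix (Fin a) (Fin b) ℝ) : Continuous (mv A) :=
  LinearMap.continuous_of_finiteDimensional (Matrix.toEuclideanLin A)

/-- Hoffman-type bound: right inverse with norm control. -/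
lemma exists_approx {a b : ℕ} (A : EuclideanSpace ℝ (Fin a) →ₗ[ℝ] EuclideanSpace ℝ (Fin b)) :
    ∃ c : ℝ, 0 ≤ c ∧ ∀ (x : EuclideanSpace ℝ (Fin a)) (bv : EuclideanSpace ℝ (Fin b)),
      bv ∈ LinearMap.range A → ∃ z, A z = bv ∧ ‖x - z‖ ≤ c * ‖A x - bv‖ := by
  obtain ⟨σ, hσ⟩ := A.rangeRestrict.exists_rightInverse_of_surjective A.range_rangeRestrict
  set σc := LinearMap.toContinuousLinearMap σ with hσc
  refine ⟨‖σc‖, ContinuousLinearMap.opNorm_nonneg _, fun x bv hbv => ?_⟩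
  have hw : A x - bv ∈ LinearMap.range A := sub_mem (LinearMap.mem_range_self A x) hbv
  refine ⟨x - σ ⟨A x - bv, hw⟩, ?_, ?_⟩
  · have : A (σ ⟨A x - bv, hw⟩) = A x - bv := by
      have := congrArg (fun f => f ⟨A x - bv, hw⟩) hσ
      simpa [LinearMap.rangeRestrict, Subtype.ext_iff] using this
    rw [map_sub, this]; abel
  · have hnorm : ‖σ ⟨A x - bv, hw⟩‖ ≤ ‖σc‖ * ‖(⟨A x - bv, hw⟩ : LinearMap.range A)‖ :=
      σc.le_opNorm _
    simpa using hnorm.trans_eq (by rw [Submodule.coe_norm])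

def AV {n N : ℕ} (v : Fin N → EuclideanSpace ℝ (Fin n)) :
    EuclideanSpace ℝ (Fin n) →ₗ[ℝ] EuclideanSpace ℝ (Fin N) :=
  (WithLp.linearEquiv 2 ℝ (Fin N → ℝ)).symm.toLinearMap ∘ₗ
    (LinearMap.pi fun k => (innerSL ℝ (v k)).toLinearMap)

lemma AV_apply {n N : ℕ} (v : Fin N → EuclideanSpace ℝ (Fin n))
    (y : EuclideanSpace ℝ (Fin n)) (k : Fin N) : AV v y k = inner ℝ (v k) y := rfl

lemma AV_norm_sq {n N : ℕ} (v : Fin N → EuclideanSpace ℝ (Fin n))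
    (y : EuclideanSpace ℝ (Fin n)) :
    ‖AV v y‖ ^ 2 = ∑ k, (inner ℝ (v k) y : ℝ) ^ 2 := by
  rw [EuclideanSpace.norm_eq, Real.sq_sqrt (by positivity)]
  simp [AV_apply, Real.norm_eq_abs, sq_abs]

lemma AV_eq_zero_iff {n N : ℕ} (v : Fin N → EuclideanSpace ℝ (Fin n))
    (y : EuclideanSpace ℝ (Fin n)) :
    AV v y = 0 ↔ ∀ k, (inner ℝ (v k) y : ℝ) = 0 := by
  constructor
  · intro h k
    have := congrFun (congrArg (fun z : EuclideanSpace ℝ (Fin N) => (z : Fin N → ℝ)) h) k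
    simpa [AV_apply] using this
  · intro h
    apply (WithLp.equiv 2 (Fin N → ℝ)).injective
    funext k
    simpa [AV_apply] using h k

set_option maxHeartbeats 2000000 in
lemma key2 {n N : ℕ}
    (X : Set (EuclideanSpace ℝ (Fin n))) (hXopen : IsOpen X)
    (Hx Hinv : EuclideanSpace ℝ (Fin n) → EuclideanSpace ℝ (Fin n))
    (hHxcont : ContinuousOn Hx X)
    (hYopen : IsOpen (Hx '' X))
    (hHinvleft : ∀ p ∈ X, Hinv (Hx p) = p)
    (hHinvC1 : ContDiffOn ℝ 1 Hinv (Hx '' X))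
    (e : EuclideanSpace ℝ (Fin n))
    (J : Fin N → Matrix (Fin n) (Fin n) ℝ)
    (T : Set (EuclideanSpace ℝ (Fin n)))
    (hT : T = {p ∈ X | ∀ k, brk (J k) e (Hx p) = 0})
    (K : Set (EuclideanSpace ℝ (Fin n))) (hK : IsCompact K) (hKX : K ⊆ X) :
    ∃ c : ℝ, 0 ≤ c ∧ ∀ x ∈ K, infDist x T ^ 2 ≤ c * ∑ k, brk (J k) e (Hx x) ^ 2 := by
  rcases K.eq_empty_or_nonempty with hKe | ⟨x₀, hx₀⟩
  · exact ⟨0, le_refl 0, fun x hx => absurd hx (by simp [hKe])⟩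
  -- the linear map A with coordinates ⟪(J k)ᵀ e, ·⟫
  set v : Fin N → EuclideanSpace ℝ (Fin n) := fun k => mv (J k)ᵀ e with hv
  set A := AV v with hA
  have brkA : ∀ (k : Fin N) (y : EuclideanSpace ℝ (Fin n)),
      brk (J k) e y = inner ℝ (v k) y := by
    intro k y
    show (inner ℝ e (mv (J k) y) : ℝ) = (inner ℝ (mv (J k)ᵀ e) y : ℝ)
    calc (inner ℝ e (mv (J k) y) : ℝ) = inner ℝ (mv (J k) y) e := real_inner_comm _ _
      _ = inner ℝ y (mv (J k)ᵀ e) := (mv_adjoint (J k) y e).symm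
      _ = inner ℝ (mv (J k)ᵀ e) y := real_inner_comm _ _
  set F : EuclideanSpace ℝ (Fin n) → ℝ := fun p => ∑ k, brk (J k) e (Hx p) ^ 2 with hF
  have hFA : ∀ p, F p = ‖A (Hx p)‖ ^ 2 := by
    intro p
    show (∑ k, brk (J k) e (Hx p) ^ 2) = ‖AV v (Hx p)‖ ^ 2
    rw [AV_norm_sq]
    exact Finset.sum_congr rfl fun k _ => by rw [brkA]
  have hFnonneg : ∀ p, 0 ≤ F p := fun p => Finset.sum_nonneg fun k _ => sq_nonneg _
  have ck : ∀ k : Fin N, Continuous fun y => brk (J k) e y := by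
    intro k
    unfold brk
    exact continuous_const.inner (mv_continuous (J k))
  have hFcont : ContinuousOn F X := by
    rw [hF]
    exact continuousOn_finset_sum _ fun k _ => ((ck k).comp_continuousOn hHxcont).pow 2
  -- bound on infDist over K
  obtain ⟨D, hD⟩ := hK.exists_bound_of_continuousOn (continuous_infDist_pt T).continuousOn
  have hD0 : 0 ≤ D := le_trans (norm_nonneg _) (hD x₀ hx₀)
  have hDd : ∀ x ∈ K, infDist x T ≤ D := fun x hx =>
    le_trans (le_abs_self _) (hD x hx)
  -- local estimates
  have hloc : ∀ q ∈ K, ∃ U ∈ nhds q, ∃ c : ℝ, 0 ≤ c ∧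
      ∀ x ∈ U ∩ K, infDist x T ^ 2 ≤ c * F x := by
    intro q hq
    have hqX : q ∈ X := hKX hq
    have hFCA : ContinuousAt F q := hFcont.continuousAt (hXopen.mem_nhds hqX)
    by_cases hF0 : F q = 0
    · -- Lipschitz case
      have hkq : ∀ k, (inner ℝ (v k) (Hx q) : ℝ) = 0 := by
        intro k
        have h := (Finset.sum_eq_zero_iff_of_nonneg
          (fun k _ => sq_nonneg (brk (J k) e (Hx q)))).mp hF0 k (Finset.mem_univ k)
        have := pow_eq_zero_iff (n := 2) (by norm_num) |>.mp h
        rw [← brkA]; exact this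
      set ybar := Hx q with hybar
      have hybarY : ybar ∈ Hx '' X := ⟨q, hqX, rfl⟩
      have hqT : q ∈ T := by
        rw [hT]; exact ⟨hqX, fun k => by rw [brkA]; exact hkq k⟩
      obtain ⟨L, t, ht, hLip⟩ :=
        (hHinvC1.contDiffAt (hYopen.mem_nhds hybarY)).exists_lipschitzOnWith
      obtain ⟨δ₁, hδ₁pos, hδ₁⟩ := Metric.mem_nhds_iff.mp ht
      obtain ⟨δ₂, hδ₂pos, hδ₂⟩ := Metric.mem_nhds_iff.mp (hYopen.mem_nhds hybarY)
      set δ := min δ₁ δ₂ with hδ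
      have hδpos : 0 < δ := lt_min hδ₁pos hδ₂pos
      have hballt : ball ybar δ ⊆ t := (ball_subset_ball (min_le_left _ _)).trans hδ₁
      have hballY : ball ybar δ ⊆ Hx '' X := (ball_subset_ball (min_le_right _ _)).trans hδ₂
      obtain ⟨cv, hcv0, hcv⟩ := exists_approx A
      set Ac := LinearMap.toContinuousLinearMap A with hAc
      set M := cv * ‖Ac‖ with hM
      have hM0 : 0 ≤ M := mul_nonneg hcv0 (norm_nonneg _)
      set r := δ / (M + 2) with hr
      have hrpos : 0 < r := div_pos hδpos (by linarith)
      have hrδ : r ≤ δ := by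
        rw [hr]; rw [div_le_iff₀ (by linarith)]; nlinarith
      have hAybar : A ybar = 0 := (AV_eq_zero_iff v ybar).mpr hkq
      have hHxCA : ContinuousAt Hx q := hHxcont.continuousAt (hXopen.mem_nhds hqX)
      refine ⟨X ∩ Hx ⁻¹' (ball ybar r),
        Filter.inter_mem (hXopen.mem_nhds hqX)
          (hHxCA.preimage_mem_nhds (ball_mem_nhds ybar hrpos)),
        ((L : ℝ) * cv) ^ 2, sq_nonneg _, ?_⟩
      rintro x ⟨⟨hxX, hxball⟩, hxK⟩
      set y := Hx x with hy
      have hyball : y ∈ ball ybar r := hxball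
      obtain ⟨w, hw0, hwd⟩ := hcv y 0 (Submodule.zero_mem _)
      rw [sub_zero] at hwd
      have hAy : ‖A y‖ ≤ ‖Ac‖ * ‖y - ybar‖ := by
        have : A y = Ac (y - ybar) := by
          rw [map_sub]
          show A y = A y - A ybar
          rw [hAybar, sub_zero]
        rw [this]; exact Ac.le_opNorm _
      have hyw : ‖y - w‖ ≤ M * ‖y - ybar‖ := by
        calc ‖y - w‖ ≤ cv * ‖A y‖ := hwd
          _ ≤ cv * (‖Ac‖ * ‖y - ybar‖) := by
              exact mul_le_mul_of_nonneg_left hAy hcv0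
          _ = M * ‖y - ybar‖ := by ring
      have hyd : ‖y - ybar‖ < r := by rwa [← dist_eq_norm]
      have hwball : w ∈ ball ybar δ := by
        rw [mem_ball, dist_eq_norm]
        calc ‖w - ybar‖ ≤ ‖w - y‖ + ‖y - ybar‖ := norm_sub_le_norm_sub_add_norm_sub _ _ _
          _ = ‖y - w‖ + ‖y - ybar‖ := by rw [norm_sub_rev]
          _ ≤ M * ‖y - ybar‖ + ‖y - ybar‖ := by linarith
          _ = (M + 1) * ‖y - ybar‖ := by ring
          _ < (M + 2) * r := by nlinarith [norm_nonneg (y - ybar)]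
          _ = δ := by rw [hr]; field_simp
      have hwY : w ∈ Hx '' X := hballY hwball
      obtain ⟨q', hq'X, hq'⟩ := hwY
      have hzX : Hinv w ∈ X := by rw [← hq', hHinvleft q' hq'X]; exact hq'X
      have hHxz : Hx (Hinv w) = w := by rw [← hq', hHinvleft q' hq'X]
      have hzT : Hinv w ∈ T := by
        rw [hT]
        refine ⟨hzX, fun k => ?_⟩
        rw [hHxz, brkA]
        have h0 := congrFun (congrArg
          (fun z : EuclideanSpace ℝ (Fin N) => (z : Fin N → ℝ)) hw0) k
        exact (AV_eq_zero_iff v w).mp hw0 k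
      have hxy : x = Hinv y := (hHinvleft x hxX).symm
      have hyt : y ∈ t := hballt (mem_of_mem_of_subset hyball (ball_subset_ball hrδ))
      have hwt : w ∈ t := hballt hwball
      have hdist : dist (Hinv y) (Hinv w) ≤ (L : ℝ) * dist y w :=
        hLip.dist_le_mul y hyt w hwt
      have hinf : infDist x T ≤ (L : ℝ) * cv * ‖A y‖ := by
        calc infDist x T ≤ dist x (Hinv w) := infDist_le_dist_of_mem hzT
          _ = dist (Hinv y) (Hinv w) := by rw [hxy]
          _ ≤ (L : ℝ) * dist y w := hdist
          _ = (L : ℝ) * ‖y - w‖ := by rw [dist_eq_norm]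
          _ ≤ (L : ℝ) * (cv * ‖A y‖) := mul_le_mul_of_nonneg_left hwd L.coe_nonneg
          _ = (L : ℝ) * cv * ‖A y‖ := by ring
      rw [hFA x, ← hy]
      calc infDist x T ^ 2 ≤ ((L : ℝ) * cv * ‖A y‖) ^ 2 :=
            pow_le_pow_left₀ infDist_nonneg hinf 2
        _ = ((L : ℝ) * cv) ^ 2 * ‖A y‖ ^ 2 := by ring
    · set U := F ⁻¹' (Ioi (F q / 2)) with hU
      have hFqpos : 0 < F q := lt_of_le_of_ne (hFnonneg q) (Ne.symm hF0)
      refine ⟨U, hFCA.preimage_mem_nhds (Ioi_mem_nhds (by linarith)), D ^ 2 / (F q / 2),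
        by positivity, ?_⟩
      rintro x ⟨hxU, hxK⟩
      have h1 : infDist x T ^ 2 ≤ D ^ 2 :=
        pow_le_pow_left₀ infDist_nonneg (hDd x hxK) 2
      have h2 : F q / 2 ≤ F x := le_of_lt hxU
      calc infDist x T ^ 2 ≤ D ^ 2 := h1
        _ = D ^ 2 / (F q / 2) * (F q / 2) := by field_simp
        _ ≤ D ^ 2 / (F q / 2) * F x := by
            apply mul_le_mul_of_nonneg_left h2 (by positivity)
  -- compactness covering
  choose U hU c hc0 hc using hloc
  obtain ⟨tt, htt⟩ := hK.elim_nhds_subcover' U hU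
  refine ⟨∑ q ∈ tt, c q.1 q.2, Finset.sum_nonneg fun q _ => hc0 q.1 q.2, ?_⟩
  intro x hx
  obtain ⟨q, hqtt, hxU⟩ := Set.mem_iUnion₂.mp (htt hx)
  calc infDist x T ^ 2 ≤ c q.1 q.2 * F x := hc q.1 q.2 x ⟨hxU, hx⟩
    _ ≤ (∑ q ∈ tt, c q.1 q.2) * F x := by
        apply mul_le_mul_of_nonneg_right ?_ (hFnonneg x)
        exact Finset.single_le_sum (fun q _ => hc0 q.1 q.2) hqtt

lemma continuous_mv2 {a b : ℕ} :
    Continuous fun Av : Matrix (Fin a) (Fin b) ℝ × EuclideanSpace ℝ (Fin b) =>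
      mv Av.1 Av.2 := by
  let Φ : Matrix (Fin a) (Fin b) ℝ →ₗ[ℝ]
      (EuclideanSpace ℝ (Fin b) →L[ℝ] EuclideanSpace ℝ (Fin a)) :=
    (Matrix.toEuclideanLin.trans LinearMap.toContinuousLinearMap).toLinearMap
  have h1 : Continuous Φ := LinearMap.continuous_of_finiteDimensional Φ
  have h2 : Continuous fun Av : Matrix (Fin a) (Fin b) ℝ × EuclideanSpace ℝ (Fin b) =>
      (Φ Av.1) Av.2 := (h1.comp continuous_fst).clm_apply continuous_snd
  exact h2

lemma brk_continuous {n : ℕ} (J : Matrix (Fin n) (Fin n) ℝ) (e : EuclideanSpace ℝ (Fin n)) :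
    Continuous fun y => brk J e y := by
  unfold brk
  exact continuous_const.inner (mv_continuous J)

lemma mv_continuousOn {α : Type*} [TopologicalSpace α] {s : Set α} {a b : ℕ}
    {A : α → Matrix (Fin a) (Fin b) ℝ} {v : α → EuclideanSpace ℝ (Fin b)}
    (hA : ContinuousOn A s) (hv : ContinuousOn v s) :
    ContinuousOn (fun t => mv (A t) (v t)) s := by
  have h := continuous_mv2.comp_continuousOn (hA.prodMk hv)
  exact h

lemma brk_continuousOn {α : Type*} [TopologicalSpace α] {s : Set α} {n : ℕ}
    (J : Matrix (Fin n) (Fin n) ℝ) (e : EuclideanSpace ℝ (Fin n))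
    {v : α → EuclideanSpace ℝ (Fin n)} (hv : ContinuousOn v s) :
    ContinuousOn (fun t => brk J e (v t)) s := by
  have h := (brk_continuous J e).comp_continuousOn hv
  exact h

end TurnpikeAux

set_option maxHeartbeats 4000000 in
/-- Integral turnpike estimate for output stabilization: with output matrix `C`,
reference `y_ref ∈ im C`, compact `K ⊆ 𝕏` and cost bound `C₂`, there is `C₃ ≥ 0`
independent of the horizon such that every solution of the RIPHS staying in `K` whose
stage cost `ℓ̃(x,u) = ‖Cx − y_ref‖² + (α₁y_H − α₂T₀y_S)ᵀu` integrates to at most `C₂`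
satisfies `∫₀^{t_f} [dist(x(t), C⁻¹{y_ref})² + dist(x(t),𝒯)²] dt ≤ C₃`. -/
theorem integral_turnpike_estimate_output_stabilization
    (n N m : ℕ)
    (X : Set (EuclideanSpace ℝ (Fin n))) (hXopen : IsOpen X)
    -- H ∈ C², with gradient Hx and Hessian Hxx
    (H : EuclideanSpace ℝ (Fin n) → ℝ)
    (Hx : EuclideanSpace ℝ (Fin n) → EuclideanSpace ℝ (Fin n))
    (Hxx : EuclideanSpace ℝ (Fin n) → Matrix (Fin n) (Fin n) ℝ)
    (hH : ∀ p ∈ X, HasGradientAt H (Hx p) p)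
    (hHx : ∀ p ∈ X,
      HasFDerivAt Hx (LinearMap.toContinuousLinearMap (Matrix.toEuclideanLin (Hxx p))) p)
    (hHxxcont : ContinuousOn Hxx X)
    -- 𝕐 = H_x(𝕏) is open and H_x : 𝕏 → 𝕐 is a C¹-diffeomorphism with inverse Hinv
    (hYopen : IsOpen (Hx '' X))
    (Hinv : EuclideanSpace ℝ (Fin n) → EuclideanSpace ℝ (Fin n))
    (hHinvmaps : ∀ y ∈ Hx '' X, Hinv y ∈ X)
    (hHinvleft : ∀ p ∈ X, Hinv (Hx p) = p)
    (hHinvC1 : ContDiffOn ℝ 1 Hinv (Hx '' X))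
    -- entropy S(x) = eᵀ x, e ≠ 0
    (e : EuclideanSpace ℝ (Fin n)) (he : e ≠ 0)
    (S : EuclideanSpace ℝ (Fin n) → ℝ) (hS : ∀ p, S p = (inner ℝ e p : ℝ))
    -- Poisson structure matrix field J₀, with Casimir e
    (J0 : EuclideanSpace ℝ (Fin n) → Matrix (Fin n) (Fin n) ℝ)
    (hJ0cont : ContinuousOn J0 X)
    (hJ0skew : ∀ p ∈ X, (J0 p)ᵀ = -(J0 p))
    (hCasimir : ∀ p ∈ X, mv (J0 p) e = 0)
    -- skew-symmetric structure matrices and positive continuous γ_k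
    (J : Fin N → Matrix (Fin n) (Fin n) ℝ)
    (hJskew : ∀ k, (J k)ᵀ = -(J k))
    (γ : Fin N → EuclideanSpace ℝ (Fin n) → ℝ)
    (hγpos : ∀ k, ∀ p ∈ X, 0 < γ k p)
    (hγcont : ∀ k, ContinuousOn (γ k) X)
    -- continuous input matrix
    (g : EuclideanSpace ℝ (Fin n) → Matrix (Fin n) (Fin m) ℝ)
    (hgcont : ContinuousOn g X)
    -- V = ⋂_k (J_k e)^⊥ meets 𝕐
    (hVY : ({y : EuclideanSpace ℝ (Fin n) | ∀ k, (inner ℝ y (mv (J k) e) : ℝ) = 0}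
        ∩ (Hx '' X)).Nonempty)
    -- the set of thermodynamic equilibria
    (T : Set (EuclideanSpace ℝ (Fin n)))
    (hT : T = {p ∈ X | ∀ k, brk (J k) e (Hx p) = 0})
    -- output matrix and reference in its range
    (p : ℕ) (C : Matrix (Fin p) (Fin n) ℝ)
    (yref : EuclideanSpace ℝ (Fin p)) (hyref : ∃ z, mv C z = yref)
    -- compact set, cost coefficients and cost bound
    (K : Set (EuclideanSpace ℝ (Fin n))) (hK : IsCompact K) (hKX : K ⊆ X)
    (α₁ α₂ T₀ : ℝ) (hα₁ : 0 < α₁) (hα₂ : 0 < α₂) (hT₀ : 0 < T₀)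
    (C₂ : ℝ) (hC₂ : 0 ≤ C₂) :
    ∃ C₃ : ℝ, 0 ≤ C₃ ∧
      ∀ (tf : ℝ), 0 < tf →
      ∀ (x : ℝ → EuclideanSpace ℝ (Fin n)) (u : ℝ → EuclideanSpace ℝ (Fin m))
        (x' : ℝ → EuclideanSpace ℝ (Fin n)),
        ContinuousOn u (Icc 0 tf) →
        (∀ t ∈ Icc 0 tf, x t ∈ K) →
        ContinuousOn x' (Icc 0 tf) →
        (∀ t ∈ Icc 0 tf, HasDerivWithinAt x (x' t) (Icc 0 tf) t) →
        (∀ t ∈ Icc 0 tf,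
          x' t =
            mv (J0 (x t) + ∑ k, (γ k (x t) * brk (J k) e (Hx (x t))) • J k) (Hx (x t))
              + mv (g (x t)) (u t)) →
        (∫ t in (0:ℝ)..tf,
            (‖mv C (x t) - yref‖ ^ 2
              + (inner ℝ (α₁ • mv (g (x t))ᵀ (Hx (x t)) - (α₂ * T₀) • mv (g (x t))ᵀ e)
                  (u t) : ℝ))) ≤ C₂ →
        (∫ t in (0:ℝ)..tf,
            (infDist (x t) {z : EuclideanSpace ℝ (Fin n) | mv C z = yref} ^ 2
              + infDist (x t) T ^ 2)) ≤ C₃ := by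
  classical
  have hHxcont : ContinuousOn Hx X := fun q hq =>
    ((hHx q hq).continuousAt).continuousWithinAt
  have hHcont : ContinuousOn H X := fun q hq =>
    ((hH q hq).hasFDerivAt.continuousAt).continuousWithinAt
  have hScont : Continuous S := by
    have hfun : S = fun q => (inner ℝ e q : ℝ) := funext hS
    rw [hfun]; exact continuous_const.inner continuous_id
  -- key estimate 1 : distance to the affine set
  obtain ⟨c1, hc10, hc1'⟩ := exists_approx (Matrix.toEuclideanLin C)
  have hc1 : ∀ xx : EuclideanSpace ℝ (Fin n),
      infDist xx {z : EuclideanSpace ℝ (Fin n) | mv C z = yref} ≤ c1 * ‖mv C xx - yref‖ := by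
    intro xx
    obtain ⟨z0, hz0⟩ := hyref
    obtain ⟨z, hz, hd⟩ := hc1' xx yref ⟨z0, hz0⟩
    refine le_trans (infDist_le_dist_of_mem (show z ∈ _ from hz)) ?_
    rw [dist_eq_norm]; exact hd
  -- key estimate 2 : distance to the thermodynamic equilibria
  obtain ⟨c2, hc20, hc2⟩ := key2 X hXopen Hx Hinv hHxcont hYopen hHinvleft hHinvC1 e J
    T hT K hK hKX
  rcases K.eq_empty_or_nonempty with hKe | ⟨x₀, hx₀⟩
  · refine ⟨0, le_refl 0, fun tf htf x u x' hu hxK hx'c hderiv hdyn hcost => ?_⟩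
    exact absurd (hxK 0 ⟨le_refl 0, htf.le⟩) (by simp [hKe])
  -- bound of ψ = α₁ H - α₂ T₀ S on K
  obtain ⟨Mψ, hMψ⟩ := hK.exists_bound_of_continuousOn
    (f := fun q => α₁ * H q - α₂ * T₀ * S q) ((continuousOn_const.mul (hHcont.mono hKX)).sub
      (continuousOn_const.mul hScont.continuousOn))
  have hMψ0 : 0 ≤ Mψ := le_trans (norm_nonneg _) (hMψ x₀ hx₀)
  -- uniform lower bound for the γ's on K
  obtain ⟨g0, hg00, hg0⟩ : ∃ g0 : ℝ, 0 < g0 ∧ ∀ (k : Fin N), ∀ q ∈ K, g0 ≤ γ k q := by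
    rcases Nat.eq_zero_or_pos N with hN | hN
    · exact ⟨1, one_pos, fun k => absurd k.2 (by omega)⟩
    · have hmin : ∀ k : Fin N, ∃ ε : ℝ, 0 < ε ∧ ∀ q ∈ K, ε ≤ γ k q := by
        intro k
        obtain ⟨q₀, hq₀K, hq₀⟩ := hK.exists_isMinOn ⟨x₀, hx₀⟩ ((hγcont k).mono hKX)
        exact ⟨γ k q₀, hγpos k q₀ (hKX hq₀K), fun q hq => hq₀ hq⟩
      choose ε hε0 hε using hmin
      have : Nonempty (Fin N) := Fin.pos_iff_nonempty.mp hN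
      have hne : (Finset.univ : Finset (Fin N)).Nonempty := Finset.univ_nonempty
      refine ⟨Finset.univ.inf' hne ε, ?_, ?_⟩
      · rw [Finset.lt_inf'_iff]; exact fun k _ => hε0 k
      · exact fun k q hq => le_trans (Finset.inf'_le ε (Finset.mem_univ k)) (hε k q hq)
  set Bc : ℝ := C₂ + 2 * Mψ with hBcdef
  have hBc0 : 0 ≤ Bc := by rw [hBcdef]; linarith
  have hαT : 0 < α₂ * T₀ := mul_pos hα₂ hT₀
  refine ⟨c1 ^ 2 * Bc + c2 / g0 * (Bc / (α₂ * T₀)), by positivity, ?_⟩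
  intro tf htf x u x' hu hxK hx'c hderiv hdyn hcost
  have h0tf : (0:ℝ) ≤ tf := htf.le
  have huIcc : uIcc (0:ℝ) tf = Icc 0 tf := uIcc_of_le h0tf
  have hxX : ∀ t ∈ Icc (0:ℝ) tf, x t ∈ X := fun t ht => hKX (hxK t ht)
  have hxcont : ContinuousOn x (Icc 0 tf) := fun t ht => (hderiv t ht).continuousWithinAt
  have hHxxc : ContinuousOn (fun t => Hx (x t)) (Icc 0 tf) := hHxcont.comp hxcont hxX
  have hgc : ContinuousOn (fun t => g (x t)) (Icc 0 tf) := hgcont.comp hxcont hxX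
  have hgtc : ContinuousOn (fun t => (g (x t))ᵀ) (Icc (0:ℝ) tf) := by
    have h := (continuous_id.matrix_transpose).comp_continuousOn hgc
    exact h
  have hA1c : ContinuousOn (fun t => mv (g (x t))ᵀ (Hx (x t))) (Icc 0 tf) :=
    mv_continuousOn hgtc hHxxc
  have hA2c : ContinuousOn (fun t => mv (g (x t))ᵀ e) (Icc 0 tf) :=
    mv_continuousOn hgtc continuousOn_const
  have hBfc : ContinuousOn (fun t => (inner ℝ (α₁ • mv (g (x t))ᵀ (Hx (x t))
      - (α₂ * T₀) • mv (g (x t))ᵀ e) (u t) : ℝ)) (Icc 0 tf) :=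
    ContinuousOn.inner ((hA1c.const_smul α₁).sub (hA2c.const_smul (α₂ * T₀))) hu
  have hGc : ContinuousOn
      (fun t => ∑ k, γ k (x t) * brk (J k) e (Hx (x t)) ^ 2) (Icc 0 tf) :=
    continuousOn_finset_sum _ fun k _ =>
      (((hγcont k).comp hxcont hxX).mul ((brk_continuousOn (J k) e hHxxc).pow 2))
  have hq1c : ContinuousOn (fun t => ‖mv C (x t) - yref‖ ^ 2) (Icc 0 tf) :=
    (((mv_continuousOn continuousOn_const hxcont).sub continuousOn_const).norm).pow 2
  -- power balances
  have hHt : ∀ t ∈ Icc (0:ℝ) tf,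
      (inner ℝ (Hx (x t)) (x' t) : ℝ) = inner ℝ (mv (g (x t))ᵀ (Hx (x t))) (u t) := by
    intro t ht
    have hskew0 : (inner ℝ (Hx (x t)) (mv (J0 (x t)) (Hx (x t))) : ℝ) = 0 :=
      inner_mv_skew _ (hJ0skew _ (hxX t ht)) _
    have hskewk : ∀ k : Fin N, (inner ℝ (Hx (x t))
        (mv ((γ k (x t) * brk (J k) e (Hx (x t))) • J k) (Hx (x t))) : ℝ) = 0 := by
      intro k
      rw [mv_smul, real_inner_smul_right, inner_mv_skew _ (hJskew k) _, mul_zero]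
    have hg1 : (inner ℝ (Hx (x t)) (mv (g (x t)) (u t)) : ℝ)
        = inner ℝ (mv (g (x t))ᵀ (Hx (x t))) (u t) := by
      calc (inner ℝ (Hx (x t)) (mv (g (x t)) (u t)) : ℝ)
          = inner ℝ (mv (g (x t)) (u t)) (Hx (x t)) := real_inner_comm _ _
        _ = inner ℝ (u t) (mv (g (x t))ᵀ (Hx (x t))) := (mv_adjoint _ _ _).symm
        _ = inner ℝ (mv (g (x t))ᵀ (Hx (x t))) (u t) := real_inner_comm _ _
    rw [hdyn t ht, inner_add_right, mv_add, inner_add_right, hskew0, mv_sum, inner_sum]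
    simp only [hskewk]
    simp [hg1]
  have hSt : ∀ t ∈ Icc (0:ℝ) tf, (inner ℝ e (x' t) : ℝ)
      = (∑ k, γ k (x t) * brk (J k) e (Hx (x t)) ^ 2) + inner ℝ (mv (g (x t))ᵀ e) (u t) := by
    intro t ht
    have h00 : (inner ℝ e (mv (J0 (x t)) (Hx (x t))) : ℝ) = 0 := by
      calc (inner ℝ e (mv (J0 (x t)) (Hx (x t))) : ℝ)
          = inner ℝ (mv (J0 (x t)) (Hx (x t))) e := real_inner_comm _ _
        _ = inner ℝ (Hx (x t)) (mv (J0 (x t))ᵀ e) := (mv_adjoint _ _ _).symm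
        _ = 0 := by
            rw [hJ0skew _ (hxX t ht)]
            have hneg : mv (-(J0 (x t))) e = -(mv (J0 (x t)) e) := by simp [mv]
            rw [hneg, hCasimir _ (hxX t ht)]
            simp
    have hk : ∀ k : Fin N, (inner ℝ e
        (mv ((γ k (x t) * brk (J k) e (Hx (x t))) • J k) (Hx (x t))) : ℝ)
        = γ k (x t) * brk (J k) e (Hx (x t)) ^ 2 := by
      intro k
      rw [mv_smul, real_inner_smul_right]
      have hb : (inner ℝ e (mv (J k) (Hx (x t))) : ℝ) = brk (J k) e (Hx (x t)) := rfl
      rw [hb]; ring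
    have hg2 : (inner ℝ e (mv (g (x t)) (u t)) : ℝ) = inner ℝ (mv (g (x t))ᵀ e) (u t) := by
      calc (inner ℝ e (mv (g (x t)) (u t)) : ℝ)
          = inner ℝ (mv (g (x t)) (u t)) e := real_inner_comm _ _
        _ = inner ℝ (u t) (mv (g (x t))ᵀ e) := (mv_adjoint _ _ _).symm
        _ = inner ℝ (mv (g (x t))ᵀ e) (u t) := real_inner_comm _ _
    rw [hdyn t ht, inner_add_right, mv_add, inner_add_right, h00, mv_sum, inner_sum]
    simp only [hk, hg2]
    ring
  -- derivative of ψ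
  have hψd : ∀ t ∈ Icc (0:ℝ) tf,
      HasDerivWithinAt (fun s => α₁ * H (x s) - α₂ * T₀ * S (x s))
        ((inner ℝ (α₁ • mv (g (x t))ᵀ (Hx (x t)) - (α₂ * T₀) • mv (g (x t))ᵀ e) (u t) : ℝ)
          - α₂ * T₀ * ∑ k, γ k (x t) * brk (J k) e (Hx (x t)) ^ 2) (Icc 0 tf) t := by
    intro t ht
    have hdH : HasDerivWithinAt (fun s => H (x s))
        (inner ℝ (Hx (x t)) (x' t) : ℝ) (Icc 0 tf) t := by
      have h := (hH (x t) (hxX t ht)).hasFDerivAt.comp_hasDerivWithinAt t (hderiv t ht)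
      simp at h; exact h
    have hdS : HasDerivWithinAt (fun s => S (x s)) (inner ℝ e (x' t) : ℝ) (Icc 0 tf) t := by
      have hfun : (fun s => S (x s)) = fun s => (inner ℝ e (x s) : ℝ) := funext fun s => hS (x s)
      rw [hfun]
      have h := HasDerivWithinAt.inner ℝ
        (hasDerivWithinAt_const t (Icc (0:ℝ) tf) e) (hderiv t ht)
      simpa using h
    have h := (hdH.const_mul α₁).sub (hdS.const_mul (α₂ * T₀))
    refine h.congr_deriv ?_
    rw [hHt t ht, hSt t ht, inner_sub_left, real_inner_smul_left, real_inner_smul_left]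
    ring
  have hψcont' : ContinuousOn (fun s => α₁ * H (x s) - α₂ * T₀ * S (x s)) (Icc 0 tf) :=
    fun t ht => (hψd t ht).continuousWithinAt
  -- integrabilities
  have hq1int : IntervalIntegrable (fun t => ‖mv C (x t) - yref‖ ^ 2)
      MeasureTheory.volume 0 tf := by
    apply ContinuousOn.intervalIntegrable; rw [huIcc]; exact hq1c
  have hGint : IntervalIntegrable (fun t => ∑ k, γ k (x t) * brk (J k) e (Hx (x t)) ^ 2)
      MeasureTheory.volume 0 tf := by
    apply ContinuousOn.intervalIntegrable; rw [huIcc]; exact hGc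
  have hBfint : IntervalIntegrable (fun t => (inner ℝ (α₁ • mv (g (x t))ᵀ (Hx (x t))
      - (α₂ * T₀) • mv (g (x t))ᵀ e) (u t) : ℝ)) MeasureTheory.volume 0 tf := by
    apply ContinuousOn.intervalIntegrable; rw [huIcc]; exact hBfc
  have hBGint : IntervalIntegrable (fun t => (inner ℝ (α₁ • mv (g (x t))ᵀ (Hx (x t))
      - (α₂ * T₀) • mv (g (x t))ᵀ e) (u t) : ℝ)
      - α₂ * T₀ * ∑ k, γ k (x t) * brk (J k) e (Hx (x t)) ^ 2)
      MeasureTheory.volume 0 tf := by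
    apply ContinuousOn.intervalIntegrable; rw [huIcc]
    exact hBfc.sub (continuousOn_const.mul hGc)
  -- fundamental theorem of calculus
  have hFTC : (∫ t in (0:ℝ)..tf, ((inner ℝ (α₁ • mv (g (x t))ᵀ (Hx (x t))
      - (α₂ * T₀) • mv (g (x t))ᵀ e) (u t) : ℝ)
      - α₂ * T₀ * ∑ k, γ k (x t) * brk (J k) e (Hx (x t)) ^ 2))
      = (α₁ * H (x tf) - α₂ * T₀ * S (x tf)) - (α₁ * H (x 0) - α₂ * T₀ * S (x 0)) := by
    apply intervalIntegral.integral_eq_sub_of_hasDeriv_right_of_le h0tf hψcont' ?_ hBGint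
    intro t ht
    exact ((hψd t (Ioo_subset_Icc_self ht)).hasDerivAt
      (Icc_mem_nhds ht.1 ht.2)).hasDerivWithinAt
  -- splitting the cost integral
  have hsplit : (∫ t in (0:ℝ)..tf, (‖mv C (x t) - yref‖ ^ 2
      + (inner ℝ (α₁ • mv (g (x t))ᵀ (Hx (x t)) - (α₂ * T₀) • mv (g (x t))ᵀ e) (u t) : ℝ)))
      = (∫ t in (0:ℝ)..tf, ‖mv C (x t) - yref‖ ^ 2)
        + ∫ t in (0:ℝ)..tf, (inner ℝ (α₁ • mv (g (x t))ᵀ (Hx (x t))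
            - (α₂ * T₀) • mv (g (x t))ᵀ e) (u t) : ℝ) :=
    intervalIntegral.integral_add hq1int hBfint
  have hBsplit : (∫ t in (0:ℝ)..tf, (inner ℝ (α₁ • mv (g (x t))ᵀ (Hx (x t))
      - (α₂ * T₀) • mv (g (x t))ᵀ e) (u t) : ℝ))
      = ((α₁ * H (x tf) - α₂ * T₀ * S (x tf)) - (α₁ * H (x 0) - α₂ * T₀ * S (x 0)))
        + α₂ * T₀ * ∫ t in (0:ℝ)..tf, ∑ k, γ k (x t) * brk (J k) e (Hx (x t)) ^ 2 := by
    have h1 := intervalIntegral.integral_add hBGint (hGint.const_mul (α₂ * T₀))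
    simp only [sub_add_cancel] at h1
    rw [h1, hFTC, intervalIntegral.integral_const_mul]
  -- a priori bounds
  have hxtfK : x tf ∈ K := hxK tf ⟨h0tf, le_refl tf⟩
  have hx0K : x 0 ∈ K := hxK 0 ⟨le_refl 0, h0tf⟩
  have hψtf := hMψ (x tf) hxtfK
  have hψ0 := hMψ (x 0) hx0K
  rw [Real.norm_eq_abs, abs_le] at hψtf hψ0
  have hI1 : 0 ≤ ∫ t in (0:ℝ)..tf, ‖mv C (x t) - yref‖ ^ 2 :=
    intervalIntegral.integral_nonneg h0tf (fun t ht => by positivity)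
  have hI2 : 0 ≤ ∫ t in (0:ℝ)..tf, ∑ k, γ k (x t) * brk (J k) e (Hx (x t)) ^ 2 :=
    intervalIntegral.integral_nonneg h0tf (fun t ht => Finset.sum_nonneg fun k _ =>
      mul_nonneg (hγpos k _ (hxX t ht)).le (sq_nonneg _))
  have hIbound : (∫ t in (0:ℝ)..tf, ‖mv C (x t) - yref‖ ^ 2)
      + α₂ * T₀ * (∫ t in (0:ℝ)..tf, ∑ k, γ k (x t) * brk (J k) e (Hx (x t)) ^ 2) ≤ Bc := by
    rw [hsplit, hBsplit] at hcost
    rw [hBcdef]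
    linarith [hψtf.1, hψ0.2]
  -- pointwise bound for the target integrand
  have hptwise : ∀ t ∈ Icc (0:ℝ) tf,
      infDist (x t) {z : EuclideanSpace ℝ (Fin n) | mv C z = yref} ^ 2 + infDist (x t) T ^ 2
        ≤ c1 ^ 2 * ‖mv C (x t) - yref‖ ^ 2
          + c2 / g0 * ∑ k, γ k (x t) * brk (J k) e (Hx (x t)) ^ 2 := by
    intro t ht
    have h1 : infDist (x t) {z : EuclideanSpace ℝ (Fin n) | mv C z = yref} ^ 2
        ≤ c1 ^ 2 * ‖mv C (x t) - yref‖ ^ 2 := by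
      have h := pow_le_pow_left₀ infDist_nonneg (hc1 (x t)) 2
      rw [mul_pow] at h
      exact h
    have h2 : infDist (x t) T ^ 2 ≤ c2 * ∑ k, brk (J k) e (Hx (x t)) ^ 2 :=
      hc2 (x t) (hxK t ht)
    have h3 : g0 * ∑ k, brk (J k) e (Hx (x t)) ^ 2
        ≤ ∑ k, γ k (x t) * brk (J k) e (Hx (x t)) ^ 2 := by
      rw [Finset.mul_sum]
      exact Finset.sum_le_sum fun k _ =>
        mul_le_mul_of_nonneg_right (hg0 k (x t) (hxK t ht)) (sq_nonneg _)
    have hsum0 : 0 ≤ ∑ k, brk (J k) e (Hx (x t)) ^ 2 :=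
      Finset.sum_nonneg fun k _ => sq_nonneg _
    have h4 : c2 * ∑ k, brk (J k) e (Hx (x t)) ^ 2
        ≤ c2 / g0 * ∑ k, γ k (x t) * brk (J k) e (Hx (x t)) ^ 2 := by
      rw [div_mul_eq_mul_div, le_div_iff₀ hg00]
      nlinarith [mul_le_mul_of_nonneg_left h3 hc20]
    linarith
  have hLHSint : IntervalIntegrable (fun t =>
      infDist (x t) {z : EuclideanSpace ℝ (Fin n) | mv C z = yref} ^ 2
        + infDist (x t) T ^ 2) MeasureTheory.volume 0 tf := by
    apply ContinuousOn.intervalIntegrable; rw [huIcc]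
    exact (((continuous_infDist_pt _).comp_continuousOn hxcont).pow 2).add
      (((continuous_infDist_pt _).comp_continuousOn hxcont).pow 2)
  have hRHSint : IntervalIntegrable (fun t => c1 ^ 2 * ‖mv C (x t) - yref‖ ^ 2
      + c2 / g0 * ∑ k, γ k (x t) * brk (J k) e (Hx (x t)) ^ 2) MeasureTheory.volume 0 tf := by
    apply ContinuousOn.intervalIntegrable; rw [huIcc]
    exact (continuousOn_const.mul hq1c).add (continuousOn_const.mul hGc)
  have hI2' : (∫ t in (0:ℝ)..tf, ∑ k, γ k (x t) * brk (J k) e (Hx (x t)) ^ 2)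
      ≤ Bc / (α₂ * T₀) := by
    rw [le_div_iff₀ hαT]
    nlinarith [hIbound, hI1]
  have hI1' : (∫ t in (0:ℝ)..tf, ‖mv C (x t) - yref‖ ^ 2) ≤ Bc := by
    nlinarith [hIbound, hI2, hαT]
  calc (∫ t in (0:ℝ)..tf,
        (infDist (x t) {z : EuclideanSpace ℝ (Fin n) | mv C z = yref} ^ 2
          + infDist (x t) T ^ 2))
      ≤ ∫ t in (0:ℝ)..tf, (c1 ^ 2 * ‖mv C (x t) - yref‖ ^ 2
          + c2 / g0 * ∑ k, γ k (x t) * brk (J k) e (Hx (x t)) ^ 2) :=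
        intervalIntegral.integral_mono_on h0tf hLHSint hRHSint hptwise
    _ = c1 ^ 2 * (∫ t in (0:ℝ)..tf, ‖mv C (x t) - yref‖ ^ 2)
        + c2 / g0 * ∫ t in (0:ℝ)..tf, ∑ k, γ k (x t) * brk (J k) e (Hx (x t)) ^ 2 := by
        rw [intervalIntegral.integral_add (hq1int.const_mul _) (hGint.const_mul _),
          intervalIntegral.integral_const_mul, intervalIntegral.integral_const_mul]
    _ ≤ c1 ^ 2 * Bc + c2 / g0 * (Bc / (α₂ * T₀)) := by
        have hcg : 0 ≤ c2 / g0 := div_nonneg hc20 hg00.le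
        have ha := mul_le_mul_of_nonneg_left hI1' (sq_nonneg c1)
        have hb := mul_le_mul_of_nonneg_left hI2' hcg
        exact add_le_add ha hb
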